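/- Suppose ||u_h - I_{L-1}[u_h]||_∞ ≤ C_sc·e^{-rN·2^{(L-1)/N}} and ||I_{L-1}[u_h] - ũ_{L-1}||_∞ ≤ (1/√β)·(L+1)^{2N}·τ, where τ ≤ √β·C_sc·e^{-rN·2^{(L-1)/N}}/(L+1)^{2N}. Then with accelerated initial vector c^{(0)}(y) = ũ_{L-1}(y), the initial energy-norm error satisfies ||c(y) - c^{(0)}(y)||_{A(y)} ≤ 2√α·C_sc·e^{-rN·2^{(L-1)/N}} for every y, where α is the continuity constant. -/

import Mathlib

/-- Accelerated initial-vector energy-norm error (key step of Lemma 4.7): under the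
interpolation error bound, the amplified solver error bound, and the tolerance
condition on `τ`, the accelerated initial guess satisfies
`‖c(y) - c⁽⁰⁾(y)‖_{A(y)} ≤ 2√α·C_sc·e^{-rN·2^{(L-1)/N}}` for every `y`. -/
theorem accel_initial_energy_error {Γ : Type*} {W : Type*} [NormedAddCommGroup W]
    (u I ut : Γ → W) (e : Γ → ℝ) (α β Csc r τ : ℝ) (N L : ℕ)
    (hβ : 0 < β) (hα : 0 ≤ α) (hCsc : 0 ≤ Csc) (hN : 1 ≤ N) (hL : 1 ≤ L)
    (hinterp : ∀ y : Γ, ‖u y - I y‖ ≤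
      Csc * Real.exp (-r * N * (2 : ℝ) ^ (((L : ℝ) - 1) / N)))
    (hsolver : ∀ y : Γ, ‖I y - ut y‖ ≤
      (1 / Real.sqrt β) * ((L : ℝ) + 1) ^ (2 * N) * τ)
    (hτ : τ ≤ Real.sqrt β * Csc * Real.exp (-r * N * (2 : ℝ) ^ (((L : ℝ) - 1) / N)) /
      ((L : ℝ) + 1) ^ (2 * N))
    (hE : ∀ y : Γ, e y ≤ Real.sqrt α * ‖u y - ut y‖) :
    ∀ y : Γ, e y ≤ 2 * Real.sqrt α * Csc *
      Real.exp (-r * N * (2 : ℝ) ^ (((L : ℝ) - 1) / N)) := by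
  intro y
  set E := Csc * Real.exp (-r * N * (2 : ℝ) ^ (((L : ℝ) - 1) / N)) with hEdef
  have hEpos : 0 ≤ E := mul_nonneg hCsc (Real.exp_pos _).le
  have hLpos : (0:ℝ) < ((L : ℝ) + 1) ^ (2 * N) := by positivity
  have hsb : (0:ℝ) < Real.sqrt β := Real.sqrt_pos.mpr hβ
  have h2 : ‖I y - ut y‖ ≤ E := by
    calc ‖I y - ut y‖ ≤ (1 / Real.sqrt β) * ((L : ℝ) + 1) ^ (2 * N) * τ := hsolver y
      _ ≤ (1 / Real.sqrt β) * ((L : ℝ) + 1) ^ (2 * N) *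
          (Real.sqrt β * E / ((L : ℝ) + 1) ^ (2 * N)) := by
        rw [hEdef]
        apply mul_le_mul_of_nonneg_left _ (by positivity)
        exact hτ.trans (le_of_eq (by rw [mul_assoc]))
      _ = E := by field_simp
  have h3 : ‖u y - ut y‖ ≤ 2 * E := by
    calc ‖u y - ut y‖ = ‖(u y - I y) + (I y - ut y)‖ := by rw [sub_add_sub_cancel]
      _ ≤ ‖u y - I y‖ + ‖I y - ut y‖ := norm_add_le _ _
      _ ≤ E + E := add_le_add (hinterp y) h2
      _ = 2 * E := by ring
  calc e y ≤ Real.sqrt α * ‖u y - ut y‖ := hE y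
    _ ≤ Real.sqrt α * (2 * E) := by
        exact mul_le_mul_of_nonneg_left h3 (Real.sqrt_nonneg α)
    _ = 2 * Real.sqrt α * Csc * Real.exp (-r * N * (2 : ℝ) ^ (((L : ℝ) - 1) / N)) := by
        rw [hEdef]; ring
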